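/- In the twisted Baby Fock model with generalized semi-circular operators γ_j = μ_j^{−1} β_j* + μ_j β_{−j}: (a) for all i, j ∈ {1, …, k} with i ≠ j, γ_i γ_j − ε(i,j) γ_j γ_i = 0 and γ_i* γ_j − ε(i,j) γ_j γ_i* = 0; (b) for every i ∈ {1, …, k}, γ_i² = 0 and (γ_i*)² = 0; (c) for every i ∈ {1, …, k}, γ_i* γ_i + γ_i γ_i* = (μ_i² + μ_i^{−2})·Id. -/

import Mathlib

noncomputable section BabyFock

variable {I : Type*} [Fintype I] [LinearOrder I]

/-- The left creation operator `β_i*` of the Baby Fock model, acting on the Hilbert space with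
orthonormal basis `(x_A)_{A ⊆ I}`:  `β_i*(x_A) = (∏_{j ∈ A, j < i} ε i j) • x_{A ∪ {i}}` if
`i ∉ A`, and `β_i*(x_A) = 0` if `i ∈ A`. -/
def crea (ε : I → I → ℂ) (i : I) :
    EuclideanSpace ℂ (Finset I) →L[ℂ] EuclideanSpace ℂ (Finset I) :=
  Matrix.toEuclideanCLM (𝕜 := ℂ)
    (Matrix.of fun B A : Finset I =>
      if i ∉ A ∧ B = insert i A then ∏ j ∈ A.filter (· < i), ε i j else 0)

/-- The left annihilation operator `β_i` (the adjoint of `β_i*`):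
`β_i(x_A) = (∏_{j ∈ A, j < i} ε i j) • x_{A \ {i}}` if `i ∈ A`, and `0` otherwise. -/
def anni (ε : I → I → ℂ) (i : I) :
    EuclideanSpace ℂ (Finset I) →L[ℂ] EuclideanSpace ℂ (Finset I) :=
  Matrix.toEuclideanCLM (𝕜 := ℂ)
    (Matrix.of fun B A : Finset I =>
      if i ∈ A ∧ B = A.erase i then ∏ j ∈ A.filter (· < i), ε i j else 0)

/-- The right creation operator `α_i*`:
`α_i*(x_A) = (∏_{j ∈ A, j > i} ε i j) • x_{A ∪ {i}}` if `i ∉ A`, and `0` otherwise. -/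
def creaR (ε : I → I → ℂ) (i : I) :
    EuclideanSpace ℂ (Finset I) →L[ℂ] EuclideanSpace ℂ (Finset I) :=
  Matrix.toEuclideanCLM (𝕜 := ℂ)
    (Matrix.of fun B A : Finset I =>
      if i ∉ A ∧ B = insert i A then ∏ j ∈ A.filter (i < ·), ε i j else 0)

/-- The right annihilation operator `α_i` (the adjoint of `α_i*`):
`α_i(x_A) = (∏_{j ∈ A, j > i} ε i j) • x_{A \ {i}}` if `i ∈ A`, and `0` otherwise. -/
def anniR (ε : I → I → ℂ) (i : I) :
    EuclideanSpace ℂ (Finset I) →L[ℂ] EuclideanSpace ℂ (Finset I) :=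
  Matrix.toEuclideanCLM (𝕜 := ℂ)
    (Matrix.of fun B A : Finset I =>
      if i ∈ A ∧ B = A.erase i then ∏ j ∈ A.filter (i < ·), ε i j else 0)

end BabyFock

noncomputable section

/-- The index set `I = {−k, …, −1} ∪ {1, …, k}` of the twisted Baby Fock model, as a subtype
of `ℤ`, with its natural linear order. -/
abbrev Ik (k : ℕ) : Type := {i : ℤ // i ∈ (Finset.Icc (-(k : ℤ)) (k : ℤ)).erase 0}

/-- The map `i ↦ -i` on the index set. -/
def negI {k : ℕ} (i : Ik k) : Ik k :=
  ⟨-i.1, by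
    have h := i.2
    simp only [Finset.mem_erase, Finset.mem_Icc] at h ⊢
    omega⟩

/-- The map `i ↦ |i|` on the index set. -/
def absI {k : ℕ} (i : Ik k) : Ik k :=
  ⟨|i.1|, by
    have h := i.2
    simp only [Finset.mem_erase, Finset.mem_Icc] at h ⊢
    rcases abs_cases i.1 with h' | h' <;> omega⟩

/-- For `j ∈ {1, …, k}` (encoded as `j : Fin k`), the corresponding positive element of the
index set. -/
def posIdx {k : ℕ} (j : Fin k) : Ik k :=
  ⟨(j : ℤ) + 1, by
    have h := j.isLt
    simp only [Finset.mem_erase, Finset.mem_Icc]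
    omega⟩

/-- The generalized semi-circular operator `γ_j = μ_j⁻¹ β_j* + μ_j β_{−j}` of the twisted
Baby Fock model, for `j ∈ {1, …, k}`. -/
def gam {k : ℕ} (ε : Ik k → Ik k → ℂ) (μ : Fin k → ℝ) (j : Fin k) :
    EuclideanSpace ℂ (Finset (Ik k)) →L[ℂ] EuclideanSpace ℂ (Finset (Ik k)) :=
  ((μ j : ℂ))⁻¹ • crea ε (posIdx j) + (μ j : ℂ) • anni ε (negI (posIdx j))

end


noncomputable section AuxBF
set_option linter.unusedSectionVars false
section
variable {I : Type*} [Fintype I] [LinearOrder I]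

/-- matrix of left creation -/
def cMat (ε : I → I → ℂ) (i : I) : Matrix (Finset I) (Finset I) ℂ :=
  Matrix.of fun B A : Finset I =>
      if i ∉ A ∧ B = insert i A then ∏ j ∈ A.filter (· < i), ε i j else 0

def aMat (ε : I → I → ℂ) (i : I) : Matrix (Finset I) (Finset I) ℂ :=
  Matrix.of fun B A : Finset I =>
      if i ∈ A ∧ B = A.erase i then ∏ j ∈ A.filter (· < i), ε i j else 0

def Pf (ε : I → I → ℂ) (i : I) (A : Finset I) : ℂ := ∏ j ∈ A.filter (· < i), ε i j

variable (ε : I → I → ℂ)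

lemma mul_cMat_apply (M : Matrix (Finset I) (Finset I) ℂ) (i : I) (B A : Finset I) :
    (M * cMat ε i) B A = if i ∈ A then 0 else M B (insert i A) * Pf ε i A := by
  classical
  rw [Matrix.mul_apply]
  by_cases h : i ∈ A
  · simp [cMat, h]
  · simp only [cMat, Matrix.of_apply, h, not_false_iff, true_and, mul_ite, mul_zero, if_neg h]
    rw [Finset.sum_ite_eq']
    simp [Pf]

lemma mul_aMat_apply (M : Matrix (Finset I) (Finset I) ℂ) (i : I) (B A : Finset I) :
    (M * aMat ε i) B A = if i ∈ A then M B (A.erase i) * Pf ε i A else 0 := by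
  classical
  rw [Matrix.mul_apply]
  by_cases h : i ∈ A
  · simp only [aMat, Matrix.of_apply, h, true_and, mul_ite, mul_zero, if_pos h]
    rw [Finset.sum_ite_eq']
    simp [Pf]
  · simp [aMat, h]

section eps
variable (hval : ∀ i j, ε i j = 1 ∨ ε i j = -1) (hsym : ∀ i j, ε i j = ε j i)

include hval in
lemma eps_sq (i j : I) : ε i j * ε i j = 1 := by rcases hval i j with h | h <;> rw [h] <;> norm_num

include hval in
lemma Pf_sq (i : I) (A : Finset I) : Pf ε i A * Pf ε i A = 1 := by
  rw [Pf, ← Finset.prod_mul_distrib]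
  exact Finset.prod_eq_one fun j _ => eps_sq ε hval i j

lemma Pf_insert {j : I} {A : Finset I} (hj : j ∉ A) (i : I) :
    Pf ε i (insert j A) = (if j < i then ε i j else 1) * Pf ε i A := by
  rw [Pf, Finset.filter_insert]
  split
  · rw [Finset.prod_insert (by simp [hj]), Pf]
  · rw [one_mul, Pf]

lemma Pf_erase {j : I} {A : Finset I} (hj : j ∈ A) (i : I) :
    Pf ε i A = (if j < i then ε i j else 1) * Pf ε i (A.erase j) := by
  conv_lhs => rw [← Finset.insert_erase hj, Pf_insert ε (Finset.notMem_erase j A) i]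

lemma Pf_insert_self (i : I) (A : Finset I) : Pf ε i (insert i A) = Pf ε i A := by
  rw [Pf, Pf, Finset.filter_insert, if_neg (lt_irrefl i)]

lemma Pf_erase_self (i : I) (A : Finset I) : Pf ε i (A.erase i) = Pf ε i A := by
  rw [Pf, Pf, Finset.filter_erase, Finset.erase_eq_of_notMem (by simp)]

end eps

section rel
variable (hval : ∀ i j, ε i j = 1 ∨ ε i j = -1) (hsym : ∀ i j, ε i j = ε j i)

lemma cMat_apply (i : I) (B A : Finset I) :
    cMat ε i B A = if i ∉ A ∧ B = insert i A then Pf ε i A else 0 := rfl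

lemma aMat_apply (i : I) (B A : Finset I) :
    aMat ε i B A = if i ∈ A ∧ B = A.erase i then Pf ε i A else 0 := rfl

include hval in
lemma Pf_star (i : I) (A : Finset I) : star (Pf ε i A) = Pf ε i A := by
  rw [Pf, star_prod]
  exact Finset.prod_congr rfl fun j _ => by
    rcases hval i j with h | h <;> rw [h] <;> simp

include hval in
lemma cMat_conjTranspose (i : I) : (cMat ε i).conjTranspose = aMat ε i := by
  ext B A
  rw [Matrix.conjTranspose_apply, cMat_apply, aMat_apply]
  by_cases h : i ∈ A ∧ B = A.erase i
  · obtain ⟨h1, h2⟩ := h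
    have hiB : i ∉ B := h2 ▸ Finset.notMem_erase i A
    have hAB : A = insert i B := by rw [h2, Finset.insert_erase h1]
    rw [if_pos ⟨hiB, hAB⟩, if_pos ⟨h1, h2⟩, Pf_star ε hval, h2, Pf_erase_self]
  · have h' : ¬ (i ∉ B ∧ A = insert i B) := by
      rintro ⟨hiB, hAB⟩
      exact h ⟨hAB ▸ Finset.mem_insert_self i B, by rw [hAB, Finset.erase_insert hiB]⟩
    rw [if_neg h, if_neg h', star_zero]

include hval hsym in
lemma cc_comm {i j : I} (hij : i ≠ j) :
    cMat ε i * cMat ε j = ε i j • (cMat ε j * cMat ε i) := by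
  ext B A
  rw [Matrix.smul_apply, mul_cMat_apply, mul_cMat_apply, cMat_apply, cMat_apply, smul_eq_mul]
  by_cases hjA : j ∈ A
  · rw [if_pos hjA]
    by_cases hiA : i ∈ A
    · rw [if_pos hiA, mul_zero]
    · rw [if_neg hiA, if_neg (by simp [hjA]), zero_mul, mul_zero]
  · rw [if_neg hjA]
    by_cases hiA : i ∈ A
    · rw [if_pos hiA, if_neg (by simp [hiA, hij.symm]), zero_mul, mul_zero]
    · rw [if_neg hiA]
      by_cases hB : B = insert i (insert j A)
      · rw [if_pos ⟨by simp [hiA, hij], hB⟩,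
          if_pos ⟨by simp [hjA, hij.symm], by rw [hB, Finset.insert_comm]⟩,
          Pf_insert ε hjA i, Pf_insert ε hiA j, hsym j i]
        rcases hij.lt_or_gt with h | h
        · rw [if_neg (not_lt.2 h.le), if_pos h]
          linear_combination (-(Pf ε i A * Pf ε j A)) * eps_sq ε hval i j
        · rw [if_pos h, if_neg (not_lt.2 h.le)]
          ring
      · rw [if_neg (by rintro ⟨-, h⟩; exact hB h),
          if_neg (by rintro ⟨-, h⟩; exact hB (by rw [h, Finset.insert_comm]))]
        simp

include hval hsym in
lemma ac_comm {i j : I} (hij : i ≠ j) :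
    aMat ε i * cMat ε j = ε i j • (cMat ε j * aMat ε i) := by
  ext B A
  rw [Matrix.smul_apply, mul_cMat_apply, mul_aMat_apply, aMat_apply, cMat_apply, smul_eq_mul]
  by_cases hjA : j ∈ A
  · rw [if_pos hjA]
    by_cases hiA : i ∈ A
    · rw [if_pos hiA, if_neg (by simp [Finset.mem_erase, hjA, hij.symm]), zero_mul, mul_zero]
    · rw [if_neg hiA, mul_zero]
  · rw [if_neg hjA]
    by_cases hiA : i ∈ A
    · rw [if_pos hiA]
      by_cases hB : B = insert j (A.erase i)
      · rw [if_pos ⟨Finset.mem_insert_of_mem hiA,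
          by rw [hB, Finset.erase_insert_of_ne hij.symm]⟩,
          if_pos ⟨by simp [Finset.mem_erase, hjA], hB⟩,
          Pf_insert ε hjA i, Pf_erase ε hiA j, hsym j i]
        rcases hij.lt_or_gt with h | h
        · rw [if_neg (not_lt.2 h.le), if_pos h]
          ring
        · rw [if_pos h, if_neg (not_lt.2 h.le)]
          ring
      · rw [if_neg (by rintro ⟨-, h⟩; exact hB (by rw [h, Finset.erase_insert_of_ne hij.symm])),
          if_neg (by rintro ⟨-, h⟩; exact hB h)]
        simp
    · rw [if_neg hiA, if_neg (by simp [hiA, hij]), zero_mul, mul_zero]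

include hval hsym in
lemma ca_comm {i j : I} (hij : i ≠ j) :
    cMat ε i * aMat ε j = ε i j • (aMat ε j * cMat ε i) := by
  have h := ac_comm ε hval hsym hij.symm
  rw [h, smul_smul, hsym j i, eps_sq ε hval i j, one_smul]

include hval hsym in
lemma aa_comm {i j : I} (hij : i ≠ j) :
    aMat ε i * aMat ε j = ε i j • (aMat ε j * aMat ε i) := by
  have h := congrArg Matrix.conjTranspose (cc_comm ε hval hsym hij.symm)
  rw [Matrix.conjTranspose_mul, Matrix.conjTranspose_smul, Matrix.conjTranspose_mul,
    cMat_conjTranspose ε hval, cMat_conjTranspose ε hval,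
    (by rcases hval j i with h' | h' <;> rw [h'] <;> simp : star (ε j i) = ε j i),
    hsym j i] at h
  exact h

include hval in
lemma cc_self (i : I) : cMat ε i * cMat ε i = 0 := by
  ext B A
  rw [mul_cMat_apply, cMat_apply, Matrix.zero_apply]
  by_cases h : i ∈ A
  · rw [if_pos h]
  · rw [if_neg h, if_neg (by simp), zero_mul]

include hval in
lemma aa_self (i : I) : aMat ε i * aMat ε i = 0 := by
  have h := congrArg Matrix.conjTranspose (cc_self ε hval i)
  rwa [Matrix.conjTranspose_mul, cMat_conjTranspose ε hval, Matrix.conjTranspose_zero] at h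

include hval in
lemma car (i : I) : aMat ε i * cMat ε i + cMat ε i * aMat ε i = 1 := by
  ext B A
  rw [Matrix.add_apply, mul_cMat_apply, mul_aMat_apply, aMat_apply, cMat_apply, Matrix.one_apply]
  by_cases hiA : i ∈ A
  · rw [if_pos hiA, if_pos hiA]
    by_cases hB : B = A
    · rw [if_pos ⟨Finset.notMem_erase i A, by rw [hB, Finset.insert_erase hiA]⟩, if_pos hB,
        Pf_erase_self, Pf_sq ε hval, zero_add]
    · rw [if_neg (by rintro ⟨-, h⟩; exact hB (by rw [h, Finset.insert_erase hiA])), if_neg hB,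
        zero_mul, zero_add]
  · rw [if_neg hiA, if_neg hiA, add_zero]
    by_cases hB : B = A
    · rw [if_pos ⟨Finset.mem_insert_self i A, by rw [hB, Finset.erase_insert hiA]⟩, if_pos hB,
        Pf_insert_self, Pf_sq ε hval]
    · rw [if_neg (by rintro ⟨-, h⟩; exact hB (by rw [h, Finset.erase_insert hiA])), if_neg hB,
        zero_mul]

end rel

section clm
variable (hval : ∀ i j, ε i j = 1 ∨ ε i j = -1) (hsym : ∀ i j, ε i j = ε j i)

lemma crea_eq (i : I) : crea ε i = Matrix.toEuclideanCLM (𝕜 := ℂ) (cMat ε i) := rfl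
lemma anni_eq (i : I) : anni ε i = Matrix.toEuclideanCLM (𝕜 := ℂ) (aMat ε i) := rfl

include hval in
lemma star_crea (i : I) : star (crea ε i) = anni ε i := by
  rw [crea_eq, anni_eq, ← map_star, Matrix.star_eq_conjTranspose,
    cMat_conjTranspose ε hval]

include hval in
lemma star_anni (i : I) : star (anni ε i) = crea ε i := by
  rw [← star_crea ε hval, star_star]

include hval hsym in
lemma crea_mul_crea {i j : I} (hij : i ≠ j) :
    crea ε i * crea ε j = ε i j • (crea ε j * crea ε i) := by
  have h := congrArg (Matrix.toEuclideanCLM (𝕜 := ℂ)) (cc_comm ε hval hsym hij)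
  simpa only [map_mul, map_smul, ← crea_eq] using h

include hval hsym in
lemma anni_mul_crea {i j : I} (hij : i ≠ j) :
    anni ε i * crea ε j = ε i j • (crea ε j * anni ε i) := by
  have h := congrArg (Matrix.toEuclideanCLM (𝕜 := ℂ)) (ac_comm ε hval hsym hij)
  simpa only [map_mul, map_smul, ← crea_eq, ← anni_eq] using h

include hval hsym in
lemma crea_mul_anni {i j : I} (hij : i ≠ j) :
    crea ε i * anni ε j = ε i j • (anni ε j * crea ε i) := by
  have h := congrArg (Matrix.toEuclideanCLM (𝕜 := ℂ)) (ca_comm ε hval hsym hij)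
  simpa only [map_mul, map_smul, ← crea_eq, ← anni_eq] using h

include hval hsym in
lemma anni_mul_anni {i j : I} (hij : i ≠ j) :
    anni ε i * anni ε j = ε i j • (anni ε j * anni ε i) := by
  have h := congrArg (Matrix.toEuclideanCLM (𝕜 := ℂ)) (aa_comm ε hval hsym hij)
  simpa only [map_mul, map_smul, ← anni_eq] using h

include hval in
lemma crea_sq (i : I) : crea ε i * crea ε i = 0 := by
  have h := congrArg (Matrix.toEuclideanCLM (𝕜 := ℂ)) (cc_self ε hval i)
  simpa only [map_mul, map_zero, ← crea_eq] using h

include hval in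
lemma anni_sq (i : I) : anni ε i * anni ε i = 0 := by
  have h := congrArg (Matrix.toEuclideanCLM (𝕜 := ℂ)) (aa_self ε hval i)
  simpa only [map_mul, map_zero, ← anni_eq] using h

include hval in
lemma car_clm (i : I) : anni ε i * crea ε i + crea ε i * anni ε i = 1 := by
  have h := congrArg (Matrix.toEuclideanCLM (𝕜 := ℂ)) (car ε hval i)
  simpa only [map_mul, map_add, map_one, ← crea_eq, ← anni_eq] using h

end clm
end

end AuxBF

/-- Commutation relations for the generalized semi-circular operators
`γ_j = μ_j⁻¹ β_j* + μ_j β_{−j}` of the twisted Baby Fock model: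
(a) for `i ≠ j`, `γ_i γ_j = ε(i,j) γ_j γ_i` and `γ_i* γ_j = ε(i,j) γ_j γ_i*`;
(b) `γ_i² = (γ_i*)² = 0`;
(c) `γ_i* γ_i + γ_i γ_i* = (μ_i² + μ_i⁻²)·Id`. -/
theorem stmt9 (k : ℕ) (hk : 1 ≤ k) (ε : Ik k → Ik k → ℂ)
    (hval : ∀ i j, ε i j = 1 ∨ ε i j = -1)
    (hsym : ∀ i j, ε i j = ε j i)
    (hdiag : ∀ i, ε i i = -1)
    (htw : ∀ i j, ε i j = ε (absI i) (absI j))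
    (μ : Fin k → ℝ) (hμ : ∀ j, 1 ≤ μ j) :
    (∀ i j : Fin k, i ≠ j →
      gam ε μ i * gam ε μ j - ε (posIdx i) (posIdx j) • (gam ε μ j * gam ε μ i) = 0 ∧
      star (gam ε μ i) * gam ε μ j
        - ε (posIdx i) (posIdx j) • (gam ε μ j * star (gam ε μ i)) = 0) ∧
    (∀ i : Fin k, gam ε μ i * gam ε μ i = 0 ∧ star (gam ε μ i) * star (gam ε μ i) = 0) ∧
    (∀ i : Fin k, star (gam ε μ i) * gam ε μ i + gam ε μ i * star (gam ε μ i) =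
      ((μ i : ℂ) ^ (2 : ℤ) + (μ i : ℂ) ^ (-2 : ℤ)) • 1) := by
  classical
  have hppne : ∀ i j : Fin k, i ≠ j → posIdx (k := k) i ≠ posIdx j := by
    intro i j hij h
    have := congrArg Subtype.val h
    simp only [posIdx] at this
    exact hij (Fin.ext (by omega))
  have hnnne : ∀ i j : Fin k, i ≠ j → negI (posIdx (k := k) i) ≠ negI (posIdx j) := by
    intro i j hij h
    have := congrArg Subtype.val h
    simp only [posIdx, negI] at this
    exact hij (Fin.ext (by omega))
  have hpn : ∀ i j : Fin k, posIdx (k := k) i ≠ negI (posIdx j) := by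
    intro i j h
    have := congrArg Subtype.val h
    simp only [posIdx, negI] at this
    omega
  have hnp : ∀ i j : Fin k, negI (posIdx (k := k) i) ≠ posIdx j := by
    intro i j h
    have := congrArg Subtype.val h
    simp only [posIdx, negI] at this
    omega
  have habs1 : ∀ j : Fin k, absI (posIdx (k := k) j) = posIdx j := by
    intro j
    apply Subtype.ext
    show |(j : ℤ) + 1| = (j : ℤ) + 1
    exact abs_of_nonneg (by positivity)
  have habs2 : ∀ j : Fin k, absI (negI (posIdx (k := k) j)) = posIdx j := by
    intro j
    apply Subtype.ext
    show |-((j : ℤ) + 1)| = (j : ℤ) + 1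
    rw [abs_neg]
    exact abs_of_nonneg (by positivity)
  have he_pn : ∀ i j : Fin k, ε (posIdx i) (negI (posIdx j)) = ε (posIdx i) (posIdx j) := by
    intro i j; rw [htw, habs1, habs2]
  have he_np : ∀ i j : Fin k, ε (negI (posIdx i)) (posIdx j) = ε (posIdx i) (posIdx j) := by
    intro i j; rw [htw, habs2, habs1]
  have he_nn : ∀ i j : Fin k,
      ε (negI (posIdx i)) (negI (posIdx j)) = ε (posIdx i) (posIdx j) := by
    intro i j; rw [htw, habs2, habs2]
  have he_diag_pn : ∀ i : Fin k, ε (posIdx i) (negI (posIdx i)) = -1 := by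
    intro i; rw [he_pn, hdiag]
  have he_diag_np : ∀ i : Fin k, ε (negI (posIdx i)) (posIdx i) = -1 := by
    intro i; rw [he_np, hdiag]
  have hstar : ∀ i : Fin k, star (gam ε μ i)
      = ((μ i : ℂ))⁻¹ • anni ε (posIdx i) + (μ i : ℂ) • crea ε (negI (posIdx i)) := by
    intro i
    simp only [gam]
    rw [(star_add ((μ i : ℂ)⁻¹ • crea ε (posIdx i)) ((μ i : ℂ) • anni ε (negI (posIdx i))))]
    simp only [gam, star_add, star_smul, star_crea ε hval, star_anni ε hval]
    congr 2
    · rw [star_inv₀]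
      exact congrArg _ (Complex.conj_ofReal _)
    · exact Complex.conj_ofReal _
  refine ⟨?_, ?_, ?_⟩
  · intro i j hij
    constructor
    · rw [sub_eq_zero]
      simp only [gam, add_mul, mul_add, smul_mul_assoc, mul_smul_comm]
      rw [crea_mul_crea ε hval hsym (hppne i j hij),
        crea_mul_anni ε hval hsym (hpn i j),
        anni_mul_crea ε hval hsym (hnp i j),
        anni_mul_anni ε hval hsym (hnnne i j hij),
        he_pn i j, he_np i j, he_nn i j]
      module
    · rw [sub_eq_zero, hstar i]
      simp only [gam, add_mul, mul_add, smul_mul_assoc, mul_smul_comm]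
      rw [anni_mul_crea ε hval hsym (hppne i j hij),
        anni_mul_anni ε hval hsym (hpn i j),
        crea_mul_crea ε hval hsym (hnp i j),
        crea_mul_anni ε hval hsym (hnnne i j hij),
        he_pn i j, he_np i j, he_nn i j]
      module
  · intro i
    constructor
    · simp only [gam, add_mul, mul_add, smul_mul_assoc, mul_smul_comm]
      rw [crea_sq ε hval, anni_sq ε hval,
        crea_mul_anni ε hval hsym (hpn i i), he_diag_pn i,
        anni_mul_crea ε hval hsym (hnp i i), he_diag_np i]
      module
    · simp only [hstar i, add_mul, mul_add, smul_mul_assoc, mul_smul_comm]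
      rw [crea_sq ε hval, anni_sq ε hval,
        anni_mul_crea ε hval hsym (hpn i i), he_diag_pn i,
        crea_mul_anni ε hval hsym (hnp i i), he_diag_np i]
      module
  · intro i
    have hz : ((μ i : ℂ) ^ (2 : ℤ) + (μ i : ℂ) ^ (-2 : ℤ))
        = (μ i : ℂ) * (μ i : ℂ) + ((μ i : ℂ))⁻¹ * ((μ i : ℂ))⁻¹ := by
      rw [zpow_neg, zpow_two, mul_inv]
    have hcar1 : anni ε (posIdx (k := k) i) * crea ε (posIdx i)
        = 1 - crea ε (posIdx i) * anni ε (posIdx i) := by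
      rw [eq_sub_iff_add_eq]; exact car_clm ε hval _
    have hcar2 : anni ε (negI (posIdx (k := k) i)) * crea ε (negI (posIdx i))
        = 1 - crea ε (negI (posIdx i)) * anni ε (negI (posIdx i)) := by
      rw [eq_sub_iff_add_eq]; exact car_clm ε hval _
    rw [hstar i, hz]
    simp only [gam, add_mul, mul_add, smul_mul_assoc, mul_smul_comm]
    rw [hcar1, hcar2,
      anni_mul_anni ε hval hsym (hpn i i), he_diag_pn i,
      crea_mul_crea ε hval hsym (hnp i i), he_diag_np i]
    module
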